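/- Reverse Grassmann necklace property of maximal bases: for every a ∈ ℤ, regarding the a-maximal bases as k-element sets of residues modulo n, if a ∈ I←_a then I←_a \ {a} ⊆ I←_{a−1}, while if a ∉ I←_a then I←_a = I←_{a−1}. -/

import Mathlib

open scoped BigOperators

/-- The columns of `A` are `n`-periodic. -/
def ColPeriodic (k n : ℕ) (A : ℤ → Fin k → ℂ) : Prop :=
  ∀ a : ℤ, A (a + (n : ℤ)) = A a

/-- `A` has rank `k`, i.e. its columns span `ℂ^k`. -/
def FullRank (k : ℕ) (A : ℤ → Fin k → ℂ) : Prop :=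
  Submodule.span ℂ (Set.range A) = ⊤

/-- The Gale (componentwise) partial order on finite subsets of `ℤ` of equal
cardinality: `B ≼ C` iff they have the same cardinality and, for each `i`, the
`i`-th smallest element of `B` is at most the `i`-th smallest element of `C`
(equivalently, the counting condition below). -/
def galeLE (B C : Finset ℤ) : Prop :=
  B.card = C.card ∧
    ∀ t : ℤ, (B.filter fun x => t ≤ x).card ≤ (C.filter fun x => t ≤ x).card

/-- The columns of `A` indexed by `J` form a basis of `ℂ^k`. -/
def IsColBasis (k : ℕ) (A : ℤ → Fin k → ℂ) (J : Finset ℤ) : Prop :=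
  J.card = k ∧ LinearIndependent ℂ (fun j : (J : Set ℤ) => A (j : ℤ)) ∧
    Submodule.span ℂ (A '' (J : Set ℤ)) = ⊤

/-- `I` is the `≼_a`-minimal `k`-element subset of `{a, a+1, …, a+n-1}` whose
columns form a basis of `ℂ^k` (the `a`-minimal basis `I→_a`). -/
def IsMinBasis (k n : ℕ) (A : ℤ → Fin k → ℂ) (a : ℤ) (I : Finset ℤ) : Prop :=
  I ⊆ Finset.Ico a (a + (n : ℤ)) ∧ IsColBasis k A I ∧
    ∀ J : Finset ℤ, J ⊆ Finset.Ico a (a + (n : ℤ)) → IsColBasis k A J → galeLE I J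

/-- `I` is the `≼_{a+1}`-maximal `k`-element subset of `{a-n+1, …, a}` whose
columns form a basis of `ℂ^k` (the `a`-maximal basis `I←_a`).  Note that on
representatives in `{a-n+1, …, a}` the cyclic order `≺_{a+1}` agrees with the
usual order of `ℤ`. -/
def IsMaxBasis (k n : ℕ) (A : ℤ → Fin k → ℂ) (a : ℤ) (I : Finset ℤ) : Prop :=
  I ⊆ Finset.Ioc (a - (n : ℤ)) a ∧ IsColBasis k A I ∧
    ∀ J : Finset ℤ, J ⊆ Finset.Ioc (a - (n : ℤ)) a → IsColBasis k A J → galeLE J I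

/-- The standard symmetric bilinear form `⟨x|y⟩ = ∑ i, x i * y i` on `ℂ^k`. -/
noncomputable def bil (k : ℕ) (x y : Fin k → ℂ) : ℂ := ∑ i, x i * y i

/-- `π` is the bounded affine permutation of `A`:
`π a` is the least `r` with `a ≤ r ≤ a + n` and `A a ∈ span(A (a+1), …, A r)`. -/
def IsBAP (k n : ℕ) (A : ℤ → Fin k → ℂ) (π : ℤ → ℤ) : Prop :=
  ∀ a : ℤ,
    a ≤ π a ∧ π a ≤ a + (n : ℤ) ∧
    A a ∈ Submodule.span ℂ (A '' Set.Ioc a (π a)) ∧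
    ∀ r : ℤ, a ≤ r → r ≤ a + (n : ℤ) →
      A a ∈ Submodule.span ℂ (A '' Set.Ioc a r) → π a ≤ r

/-- `T` is the right twist `τ→(A)`: for each `a`, the column `T a` pairs to `1`
with `A a` and to `0` with the other columns of the `a`-minimal basis. -/
def IsRightTwist (k n : ℕ) (A T : ℤ → Fin k → ℂ) : Prop :=
  ∀ (a : ℤ) (I : Finset ℤ), IsMinBasis k n A a I →
    ∀ b ∈ I, bil k (T a) (A b) = if b = a then 1 else 0

/-- `T` is the left twist `τ←(A)`: for each `a`, the column `T a` pairs to `1`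
with `A a` and to `0` with the other columns of the `a`-maximal basis. -/
def IsLeftTwist (k n : ℕ) (A T : ℤ → Fin k → ℂ) : Prop :=
  ∀ (a : ℤ) (I : Finset ℤ), IsMaxBasis k n A a I →
    ∀ b ∈ I, bil k (T a) (A b) = if b = a then 1 else 0

/-- `Δ_I(A)`, where `I = {i 0 < i 1 < ⋯ < i (k-1)}` is given by a strictly
monotone enumeration `i : Fin k → ℤ`: the determinant of the `k×k` matrix with
columns `A (i 0), …, A (i (k-1))`. -/
noncomputable def Delta (k : ℕ) (A : ℤ → Fin k → ℂ) (i : Fin k → ℤ) : ℂ :=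
  Matrix.det (Matrix.of fun r s : Fin k => A (i s) r)

section Aux

variable {k n : ℕ} {A : ℤ → Fin k → ℂ}

lemma aux_range_coe (I : Finset ℤ) :
    Set.range (fun j : ↥((I : Set ℤ)) => A ↑j) = A '' (I : Set ℤ) := by
  rw [show (fun j : ↥((I : Set ℤ)) => A ↑j) = A ∘ Subtype.val from rfl,
    Set.range_comp, Subtype.range_val]

lemma aux_not_gale {I : Finset ℤ} {x y : ℤ} (hxI : x ∈ I) (hyI : y ∉ I) (hxy : x < y) :
    ¬ galeLE (insert y (I.erase x)) I := by
  rintro ⟨-, h⟩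
  have h1 := h (x + 1)
  have e0 : ((I.erase x).filter fun t => x + 1 ≤ t) = I.filter fun t => x + 1 ≤ t := by
    ext z
    simp only [Finset.mem_filter, Finset.mem_erase]
    constructor
    · rintro ⟨⟨_, h2⟩, h3⟩; exact ⟨h2, h3⟩
    · rintro ⟨h1, h2⟩; exact ⟨⟨by omega, h1⟩, h2⟩
  rw [Finset.filter_insert, if_pos (by omega : x + 1 ≤ y), e0,
    Finset.card_insert_of_notMem (by simp [hyI])] at h1
  omega

/-- Exchange: replace `x ∈ I` by `y` with `A y ∉ span (A '' (I \ {x}))`. -/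
lemma aux_exchange {I : Finset ℤ} (hI : IsColBasis k A I) {x y : ℤ} (hx : x ∈ I)
    (hyI : y ∉ I) (hy : A y ∉ Submodule.span ℂ (A '' ((I : Set ℤ) \ {x}))) :
    IsColBasis k A (insert y (I.erase x)) := by
  obtain ⟨hcard, hind, hspan⟩ := hI
  set K : Finset ℤ := insert y (I.erase x) with hK
  have hyK : y ∉ I.erase x := fun h => hyI (Finset.mem_of_mem_erase h)
  have hk1 : 1 ≤ k := hcard ▸ Finset.card_pos.mpr ⟨x, hx⟩
  have hKcard : K.card = k := by
    rw [hK, Finset.card_insert_of_notMem hyK, Finset.card_erase_of_mem hx, hcard]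
    omega
  haveI : Fintype ↥((I : Set ℤ)) := FinsetCoe.fintype I
  let B : Module.Basis ↥((I : Set ℤ)) ℂ (Fin k → ℂ) :=
    Module.Basis.mk hind (by rw [aux_range_coe, hspan])
  have hB : ∀ j, B j = A ↑j := fun j => by simp [B, Module.Basis.mk_apply]
  set x0 : ↥((I : Set ℤ)) := ⟨x, hx⟩ with hx0
  set c := B.repr (A y) with hc
  have hsum : ∑ j, c j • A ↑j = A y := by
    conv_rhs => rw [← B.sum_repr (A y)]
    exact Finset.sum_congr rfl fun j _ => by rw [hB]
  -- the sum over j ≠ x0 lies in span (A '' (I \ {x}))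
  have hrest : ∀ (s : Finset ↥((I : Set ℤ))), x0 ∉ s →
      ∑ j ∈ s, c j • A ↑j ∈ Submodule.span ℂ (A '' ((I : Set ℤ) \ {x})) := by
    intro s hs
    refine Submodule.sum_mem _ fun j hj => Submodule.smul_mem _ _ (Submodule.subset_span ?_)
    refine ⟨↑j, ⟨j.2, ?_⟩, rfl⟩
    intro h
    exact hs (by rwa [show j = x0 from Subtype.ext h] at hj)
  have hsplit : A y = c x0 • A x + ∑ j ∈ Finset.univ.erase x0, c j • A ↑j := by
    rw [← hsum, ← Finset.add_sum_erase _ _ (Finset.mem_univ x0)]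
  have hcx0 : c x0 ≠ 0 := by
    intro h0
    apply hy
    rw [hsplit, h0, zero_smul, zero_add]
    exact hrest _ (Finset.notMem_erase _ _)
  -- A x ∈ span (A '' K)
  have hsubKspan : Submodule.span ℂ (A '' ((I : Set ℤ) \ {x})) ≤
      Submodule.span ℂ (A '' (K : Set ℤ)) := by
    refine Submodule.span_mono (Set.image_mono ?_)
    rintro z ⟨hzI, hzx⟩
    simp only [hK, Finset.coe_insert, Set.mem_insert_iff, Finset.mem_coe,
      Finset.mem_erase]
    exact Or.inr ⟨by simpa using hzx, hzI⟩
  have hAx : A x ∈ Submodule.span ℂ (A '' (K : Set ℤ)) := by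
    have hAy : A y ∈ Submodule.span ℂ (A '' (K : Set ℤ)) :=
      Submodule.subset_span ⟨y, by simp [hK], rfl⟩
    have hr := hrest (Finset.univ.erase x0) (Finset.notMem_erase _ _)
    have : c x0 • A x ∈ Submodule.span ℂ (A '' (K : Set ℤ)) := by
      have := Submodule.sub_mem _ hAy (hsubKspan hr)
      rwa [hsplit, add_sub_cancel_right] at this
    have := Submodule.smul_mem _ (c x0)⁻¹ this
    rwa [smul_smul, inv_mul_cancel₀ hcx0, one_smul] at this
  have hspanK : Submodule.span ℂ (A '' (K : Set ℤ)) = ⊤ := by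
    rw [← top_le_iff, ← hspan, Submodule.span_le]
    rintro _ ⟨z, hzI, rfl⟩
    by_cases hzx : z = x
    · subst hzx; exact hAx
    · exact Submodule.subset_span ⟨z, by simp [hK, Finset.mem_erase, hzx, hzI], rfl⟩
  haveI : Fintype ↥((K : Set ℤ)) := FinsetCoe.fintype K
  have hKcard' : Fintype.card ↥((K : Set ℤ)) = Module.finrank ℂ (Fin k → ℂ) := by
    rw [Module.finrank_fintype_fun_eq_card, Fintype.card_fin]
    simpa using hKcard
  refine ⟨hKcard, ?_, hspanK⟩
  exact linearIndependent_of_top_le_span_of_card_eq_finrank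
    (by rw [aux_range_coe, hspanK]) hKcard'

end Aux
/-- Greedy characterization of the maximal basis. -/
lemma maxBasis_mem_iff {k n : ℕ} {A : ℤ → Fin k → ℂ} {a : ℤ} {I : Finset ℤ}
    (hI : IsMaxBasis k n A a I) {x : ℤ} (hx : x ∈ Finset.Ioc (a - (n : ℤ)) a) :
    x ∈ I ↔ A x ∉ Submodule.span ℂ (A '' Set.Ioc x a) := by
  obtain ⟨hIsub, hIb, hImax⟩ := hI
  obtain ⟨hcard, hind, hspan⟩ := id hIb
  simp only [Finset.mem_Ioc] at hx
  constructor
  · -- x ∈ I → A x ∉ span of larger columns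
    intro hxI hmem
    -- A x is not in the span of the other columns of I
    have hnot : A x ∉ Submodule.span ℂ (A '' ((I : Set ℤ) \ {x})) := by
      have h1 := hind.notMem_span_image (s := {j : ↥((I : Set ℤ)) | (j : ℤ) ≠ x})
        (x := ⟨x, hxI⟩) (by simp)
      convert h1 using 3
      ext v
      constructor
      · rintro ⟨z, ⟨hz1, hz2⟩, rfl⟩
        exact ⟨⟨z, hz1⟩, by simpa using hz2, rfl⟩
      · rintro ⟨j, hj, rfl⟩
        exact ⟨↑j, ⟨j.2, by simpa using hj⟩, rfl⟩
    -- find y ∈ Ioc x a with A y outside span (A '' (I \ {x}))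
    have hexy : ∃ y ∈ Set.Ioc x a, A y ∉ Submodule.span ℂ (A '' ((I : Set ℤ) \ {x})) := by
      by_contra hcon
      push_neg at hcon
      apply hnot
      refine Submodule.span_le.mpr ?_ hmem
      rintro _ ⟨y, hy, rfl⟩
      exact hcon y hy
    obtain ⟨y, hy, hyspan⟩ := hexy
    have hyI : y ∉ I := by
      intro hyI
      have h1 := hy.1
      exact hyspan (Submodule.subset_span ⟨y, ⟨hyI, by simp; omega⟩, rfl⟩)
    have hJb : IsColBasis k A (insert y (I.erase x)) := aux_exchange hIb hxI hyI hyspan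
    have hJsub : insert y (I.erase x) ⊆ Finset.Ioc (a - (n : ℤ)) a := by
      intro z hz
      rcases Finset.mem_insert.mp hz with rfl | hz
      · have h1 := hy.1
        simp only [Finset.mem_Ioc]; exact ⟨by omega, hy.2⟩
      · exact hIsub (Finset.mem_of_mem_erase hz)
    exact aux_not_gale hxI hyI hy.1 (hImax _ hJsub hJb)
  · -- A x ∉ span of larger columns → x ∈ I
    intro hmem
    by_contra hxI
    haveI : Fintype ↥((I : Set ℤ)) := FinsetCoe.fintype I
    let B : Module.Basis ↥((I : Set ℤ)) ℂ (Fin k → ℂ) :=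
      Module.Basis.mk hind (by rw [aux_range_coe, hspan])
    have hB : ∀ j, B j = A ↑j := fun j => by simp [B, Module.Basis.mk_apply]
    set c := B.repr (A x) with hc
    have hsum : ∑ j, c j • A ↑j = A x := by
      conv_rhs => rw [← B.sum_repr (A x)]
      exact Finset.sum_congr rfl fun j _ => by rw [hB]
    have hexz : ∃ z : ↥((I : Set ℤ)), c z ≠ 0 ∧ (z : ℤ) < x := by
      by_contra hcon
      push_neg at hcon
      apply hmem
      rw [← hsum]
      refine Submodule.sum_mem _ fun j _ => ?_
      by_cases hj0 : c j = 0
      · rw [hj0, zero_smul]; exact Submodule.zero_mem _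
      · have hjx : x < (j : ℤ) := by
          have h1 := hcon j hj0
          have h2 : (j : ℤ) ≠ x := fun h => hxI (h ▸ j.2)
          omega
        have hja : (j : ℤ) ≤ a := by
          have := hIsub j.2
          simp only [Finset.mem_Ioc] at this; omega
        exact Submodule.smul_mem _ _ (Submodule.subset_span ⟨↑j, ⟨hjx, hja⟩, rfl⟩)
    obtain ⟨z, hz0, hzx⟩ := hexz
    -- A x ∉ span (A '' (I \ {z}))
    have hznot : A x ∉ Submodule.span ℂ (A '' ((I : Set ℤ) \ {(z : ℤ)})) := by
      intro hmem2
      have him : A '' ((I : Set ℤ) \ {(z : ℤ)}) = ⇑B '' {j : ↥((I : Set ℤ)) | j ≠ z} := by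
        ext v
        constructor
        · rintro ⟨w, ⟨hw1, hw2⟩, rfl⟩
          exact ⟨⟨w, hw1⟩, fun h => hw2 (by simpa using congrArg Subtype.val h),
            by rw [hB]⟩
        · rintro ⟨j, hj, rfl⟩
          exact ⟨↑j, ⟨j.2, fun h => hj (Subtype.ext (by simpa using h))⟩, (hB j).symm⟩
      rw [him, B.mem_span_image] at hmem2
      exact hz0 (by_contra fun h => absurd (hmem2 (Finsupp.mem_support_iff.mpr h)) (by simp))
    have hJb : IsColBasis k A (insert x (I.erase (z : ℤ))) :=
      aux_exchange hIb z.2 hxI hznot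
    have hJsub : insert x (I.erase (z : ℤ)) ⊆ Finset.Ioc (a - (n : ℤ)) a := by
      intro w hw
      rcases Finset.mem_insert.mp hw with rfl | hw
      · simp only [Finset.mem_Ioc]; exact ⟨hx.1, hx.2⟩
      · exact hIsub (Finset.mem_of_mem_erase hw)
    exact aux_not_gale z.2 hxI hzx (hImax _ hJsub hJb)
/-- reverse Grassmann necklace property of maximal bases:
for every `a ∈ ℤ`, regarding the `a`-maximal bases as `k`-element sets of
residues modulo `n`, if `a ∈ I←_a` then `I←_a \ {a} ⊆ I←_{a-1}`, while if
`a ∉ I←_a` then `I←_a = I←_{a-1}`. -/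
theorem reverse_grassmann_necklace_property
    (k n : ℕ) (hk : 1 ≤ k) (hkn : k ≤ n)
    (A : ℤ → Fin k → ℂ) (hper : ColPeriodic k n A) (hrank : FullRank k A)
    (a : ℤ) (Ia Ia' : Finset ℤ)
    (hIa : IsMaxBasis k n A a Ia) (hIa' : IsMaxBasis k n A (a - 1) Ia') :
    (a ∈ Ia →
      (Ia.erase a).image (fun x : ℤ => (x : ZMod n)) ⊆
        Ia'.image (fun x : ℤ => (x : ZMod n))) ∧
    (a ∉ Ia →
      Ia.image (fun x : ℤ => (x : ZMod n)) =
        Ia'.image (fun x : ℤ => (x : ZMod n))) := by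
  
  have hn1 : 1 ≤ n := le_trans hk hkn
  have hmemA : ∀ x ∈ Finset.Ioc (a - (n : ℤ)) a,
      (x ∈ Ia ↔ A x ∉ Submodule.span ℂ (A '' Set.Ioc x a)) :=
    fun x hx => maxBasis_mem_iff hIa hx
  have hmemA' : ∀ x ∈ Finset.Ioc (a - 1 - (n : ℤ)) (a - 1),
      (x ∈ Ia' ↔ A x ∉ Submodule.span ℂ (A '' Set.Ioc x (a - 1))) :=
    fun x hx => maxBasis_mem_iff hIa' hx
  have hmono : ∀ c : ℤ, Submodule.span ℂ (A '' Set.Ioc c (a - 1)) ≤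
      Submodule.span ℂ (A '' Set.Ioc c a) :=
    fun c => Submodule.span_mono (Set.image_mono (Set.Ioc_subset_Ioc_right (by omega)))
  constructor
  · -- a ∈ Ia
    intro _
    apply Finset.image_subset_image
    intro c hc
    have hcne : c ≠ a := Finset.ne_of_mem_erase hc
    have hcI : c ∈ Ia := Finset.mem_of_mem_erase hc
    have hcw : c ∈ Finset.Ioc (a - (n : ℤ)) a := hIa.1 hcI
    simp only [Finset.mem_Ioc] at hcw
    have hcw' : c ∈ Finset.Ioc (a - 1 - (n : ℤ)) (a - 1) := by
      simp only [Finset.mem_Ioc]; omega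
    have h1 := (hmemA c (by simp only [Finset.mem_Ioc]; omega)).mp hcI
    exact (hmemA' c hcw').mpr fun h => h1 (hmono c h)
  · -- a ∉ Ia
    intro ha
    have hAa : A a = 0 := by
      have h1 := (hmemA a (by simp only [Finset.mem_Ioc]; omega))
      have h2 : A a ∈ Submodule.span ℂ (A '' Set.Ioc a a) := by
        by_contra h2
        exact ha (h1.mpr h2)
      rwa [Set.Ioc_self, Set.image_empty, Submodule.span_empty,
        Submodule.mem_bot] at h2
    have key : ∀ c : ℤ, c < a → Submodule.span ℂ (A '' Set.Ioc c a) =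
        Submodule.span ℂ (A '' Set.Ioc c (a - 1)) := by
      intro c hc
      refine le_antisymm ?_ (hmono c)
      refine Submodule.span_le.mpr ?_
      rintro _ ⟨y, hy, rfl⟩
      by_cases hya : y = a
      · subst hya; rw [hAa]; exact Submodule.zero_mem _
      · exact Submodule.subset_span ⟨y, ⟨hy.1, by have := hy.2; omega⟩, rfl⟩
    have hIeq : Ia = Ia' := by
      ext c
      constructor
      · intro hc
        have hcw : c ∈ Finset.Ioc (a - (n : ℤ)) a := hIa.1 hc
        simp only [Finset.mem_Ioc] at hcw
        have hcne : c ≠ a := fun h => ha (h ▸ hc)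
        have h1 := (hmemA c (by simp only [Finset.mem_Ioc]; omega)).mp hc
        rw [key c (by omega)] at h1
        exact (hmemA' c (by simp only [Finset.mem_Ioc]; omega)).mpr h1
      · intro hc
        have hcw : c ∈ Finset.Ioc (a - 1 - (n : ℤ)) (a - 1) := hIa'.1 hc
        simp only [Finset.mem_Ioc] at hcw
        have h1 := (hmemA' c (by simp only [Finset.mem_Ioc]; omega)).mp hc
        have hcan : c ≠ a - n := by
          intro h
          apply h1
          have hp : A (a - (n : ℤ)) = A a := by
            have h2 := hper (a - (n : ℤ))
            rw [show a - (n : ℤ) + n = a by ring] at h2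
            exact h2.symm
          rw [h, hp, hAa]
          exact Submodule.zero_mem _
        rw [← key c (by omega)] at h1
        exact (hmemA c (by simp only [Finset.mem_Ioc]; omega)).mpr h1
    rw [hIeq]
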